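/- For all planar binary trees x and y, one has P_{x∖y} = P_x * P_y and P_{x/y} = P_x / P_y in ℤY. -/

import Mathlib

/-- A planar binary tree: either the trivial tree (a leaf) or an ordered pair of
planar binary trees. -/
inductive PBT : Type
  | leaf : PBT
  | node : PBT → PBT → PBT
  deriving DecidableEq

namespace PBT

/-- Number of internal vertices of a planar binary tree. -/
def size : PBT → ℕ
  | leaf => 0
  | node a b => a.size + b.size + 1

/-- One covering move of the Tamari order: `Rot x y` holds when `y` is obtained
from `x` by replacing some subtree of the form `((a,b),c)` by `(a,(b,c))`. -/
inductive Rot : PBT → PBT → Prop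
  | rot (a b c : PBT) : Rot (node (node a b) c) (node a (node b c))
  | left {a a' : PBT} (b : PBT) : Rot a a' → Rot (node a b) (node a' b)
  | right (a : PBT) {b b' : PBT} : Rot b b' → Rot (node a b) (node a b')

/-- The Tamari order: reflexive-transitive closure of `Rot`. -/
def tle (x y : PBT) : Prop := Relation.ReflTransGen Rot x y

/-- Grafting of `x` on the leftmost leaf of `y` : the operation `x / y`. -/
def _root_.PBT.over : PBT → PBT → PBT
  | x, leaf => x
  | x, node y₁ y₂ => node (PBT.over x y₁) y₂

/-- Grafting of `y` on the rightmost leaf of `x` : the operation `x ∖ y`. -/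
def under : PBT → PBT → PBT
  | leaf, y => y
  | node x₁ x₂, y => node x₁ (under x₂ y)

theorem Rot.size_eq {x y : PBT} (h : Rot x y) : x.size = y.size := by
  induction h <;> simp [size] <;> omega

theorem tle.size_eq {x y : PBT} (h : tle x y) : x.size = y.size := by
  induction h with
  | refl => rfl
  | tail _ h ih => rw [ih, h.size_eq]

theorem finite_size_le (n : ℕ) : {z : PBT | z.size ≤ n}.Finite := by
  induction n with
  | zero =>
    apply Set.Finite.subset (Set.finite_singleton leaf)
    rintro (_ | ⟨a, b⟩) hz
    · simp
    · simp [size] at hz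
  | succ n ih =>
    apply Set.Finite.subset ((Set.Finite.image2 node ih ih).insert leaf)
    rintro (_ | ⟨a, b⟩) hz
    · simp
    · simp only [Set.mem_setOf_eq, size] at hz
      exact Set.mem_insert_iff.mpr
        (Or.inr (Set.mem_image2.mpr ⟨a, by simp only [Set.mem_setOf_eq]; omega, b, by simp only [Set.mem_setOf_eq]; omega, rfl⟩))

theorem finite_size (n : ℕ) : {z : PBT | z.size = n}.Finite :=
  (finite_size_le n).subset fun _ hz => le_of_eq hz

theorem finite_tle_right (x : PBT) : {y : PBT | tle y x}.Finite :=
  (finite_size x.size).subset fun _ hy => hy.size_eq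

theorem finite_tle_left (x : PBT) : {y : PBT | tle x y}.Finite :=
  (finite_size x.size).subset fun _ hy => hy.size_eq.symm

theorem finite_interval (x y : PBT) :
    {z : PBT | tle (PBT.over x y) z ∧ tle z (under x y)}.Finite :=
  (finite_tle_right (under x y)).subset fun _ hz => hz.2

end PBT

/-- The free abelian group `ℤY = ⊕ₙ ℤYₙ` on the set of all planar binary trees. -/
abbrev ZY : Type := PBT →₀ ℤ

namespace PBT

/-- The basis element `S_x` of `ℤY`. -/
noncomputable def S (x : PBT) : ZY := Finsupp.single x 1

/-- The class `P_x = ∑_{y ≤ x} S_y` of the projective module. -/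
noncomputable def P (x : PBT) : ZY := ∑ y ∈ (finite_tle_right x).toFinset, S y

/-- The class `I_x = ∑_{y ≥ x} S_y` of the injective module. -/
noncomputable def I (x : PBT) : ZY := ∑ y ∈ (finite_tle_left x).toFinset, S y

/-- The Loday-Ronco product on basis elements:
`S_x * S_y = ∑_{x/y ≤ z ≤ x∖y} S_z`. -/
noncomputable def starB (x y : PBT) : ZY := ∑ z ∈ (finite_interval x y).toFinset, S z

/-- Bilinear extension of a product defined on basis elements. -/
noncomputable def bilin (f : PBT → PBT → ZY) (a b : ZY) : ZY :=
  a.sum fun x ax => b.sum fun y byy => (ax * byy) • f x y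

/-- The product `/` on `ℤY`, with `S_x / S_y = S_{x/y}`. -/
noncomputable def overM : ZY → ZY → ZY := bilin fun x y => S (x.over y)

/-- The product `∖` on `ℤY`, with `S_x ∖ S_y = S_{x∖y}`. -/
noncomputable def underM : ZY → ZY → ZY := bilin fun x y => S (x.under y)

/-- The Loday-Ronco product `*` on `ℤY`. -/
noncomputable def starM : ZY → ZY → ZY := bilin starB

/-- The unique planar binary tree `•` with one internal vertex. -/
def dot : PBT := node leaf leaf

end PBT

namespace PBT

@[simp] lemma size_leaf : size leaf = 0 := rfl
@[simp] lemma size_node (a b : PBT) : size (node a b) = a.size + b.size + 1 := rfl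
@[simp] lemma over_leaf (x : PBT) : PBT.over x leaf = x := rfl
@[simp] lemma over_node (x y₁ y₂ : PBT) : PBT.over x (node y₁ y₂) = node (PBT.over x y₁) y₂ := rfl
@[simp] lemma under_leaf (y : PBT) : under leaf y = y := rfl
@[simp] lemma under_node (x₁ x₂ y : PBT) : under (node x₁ x₂) y = node x₁ (under x₂ y) := rfl

lemma size_over (x y : PBT) : size (PBT.over x y) = size x + size y := by
  induction y with
  | leaf => simp
  | node a b iha ihb => simp [iha]; omega

lemma size_under (x y : PBT) : size (under x y) = size x + size y := by
  induction x with
  | leaf => simp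
  | node a b iha ihb => simp [ihb]; omega

lemma tle_refl (x : PBT) : tle x x := Relation.ReflTransGen.refl

lemma tle_trans {x y z : PBT} (h1 : tle x y) (h2 : tle y z) : tle x z :=
  Relation.ReflTransGen.trans h1 h2

lemma rot_tle {x y : PBT} (h : Rot x y) : tle x y := Relation.ReflTransGen.single h

lemma tle_node_left {a a' : PBT} (b : PBT) (h : tle a a') : tle (node a b) (node a' b) :=
  Relation.ReflTransGen.lift (fun t => node t b) (fun _ _ h => Rot.left b h) _ _ h

lemma tle_node_right (a : PBT) {b b' : PBT} (h : tle b b') : tle (node a b) (node a b') :=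
  Relation.ReflTransGen.lift (fun t => node a t) (fun _ _ h => Rot.right a h) _ _ h

lemma Rot.under_left {u u' : PBT} (h : Rot u u') (v : PBT) : Rot (under u v) (under u' v) := by
  induction h with
  | rot a b c => exact Rot.rot a b (under c v)
  | left b h ih => exact Rot.left _ h
  | right a h ih => exact Rot.right _ ih

lemma Rot.under_right (u : PBT) {v v' : PBT} (h : Rot v v') : Rot (under u v) (under u v') := by
  induction u with
  | leaf => exact h
  | node a b iha ihb => exact Rot.right _ ihb

lemma Rot.over_left {u u' : PBT} (h : Rot u u') (v : PBT) : Rot (PBT.over u v) (PBT.over u' v) := by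
  induction v with
  | leaf => exact h
  | node a b iha ihb => exact Rot.left _ iha

lemma Rot.over_right (u : PBT) {v v' : PBT} (h : Rot v v') : Rot (PBT.over u v) (PBT.over u v') := by
  induction h with
  | rot a b c => exact Rot.rot (PBT.over u a) b c
  | left b h ih => exact Rot.left _ ih
  | right a h ih => exact Rot.right _ h

lemma tle_under {u u' v v' : PBT} (h1 : tle u u') (h2 : tle v v') :
    tle (under u v) (under u' v') :=
  tle_trans
    (Relation.ReflTransGen.lift (fun t => under t v) (fun _ _ h => h.under_left v) _ _ h1)
    (Relation.ReflTransGen.lift (fun t => under u' t) (fun _ _ h => h.under_right u') _ _ h2)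

lemma tle_over {u u' v v' : PBT} (h1 : tle u u') (h2 : tle v v') :
    tle (PBT.over u v) (PBT.over u' v') :=
  tle_trans
    (Relation.ReflTransGen.lift (fun t => PBT.over t v) (fun _ _ h => h.over_left v) _ _ h1)
    (Relation.ReflTransGen.lift (fun t => PBT.over u' t) (fun _ _ h => h.over_right u') _ _ h2)

/-- A weight that strictly decreases along `Rot`. -/
def wt : PBT → ℕ
  | leaf => 0
  | node a b => wt a + wt b + size a

lemma Rot.wt_lt {x y : PBT} (h : Rot x y) : wt y < wt x := by
  induction h with
  | rot a b c => simp [wt]; omega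
  | left b h ih => simp [wt, h.size_eq] at *; omega
  | right a h ih => simp [wt] at *; omega

lemma tle_eq_or_wt_lt {x y : PBT} (h : tle x y) : x = y ∨ wt y < wt x := by
  induction h with
  | refl => exact Or.inl rfl
  | tail h1 h2 ih =>
    rcases ih with rfl | ih
    · exact Or.inr h2.wt_lt
    · exact Or.inr (lt_trans h2.wt_lt ih)

lemma tle_antisymm {x y : PBT} (h1 : tle x y) (h2 : tle y x) : x = y := by
  rcases tle_eq_or_wt_lt h1 with rfl | h1'
  · rfl
  rcases tle_eq_or_wt_lt h2 with rfl | h2'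
  · rfl
  omega

/-- Splitting a tree along the path from leaf `m` to the root. -/
def split : ℕ → PBT → PBT × PBT
  | _, leaf => (leaf, leaf)
  | m, node a b =>
    if m ≤ a.size then
      ((split m a).1, node (split m a).2 b)
    else
      (node a (split (m - a.size - 1) b).1, (split (m - a.size - 1) b).2)

@[simp] lemma split_leaf (m : ℕ) : split m leaf = (leaf, leaf) := rfl

lemma split_node_le {m : ℕ} {a : PBT} (b : PBT) (h : m ≤ a.size) :
    split m (node a b) = ((split m a).1, node (split m a).2 b) := by
  simp [split, h]

lemma split_node_gt {m : ℕ} {a : PBT} (b : PBT) (h : ¬ m ≤ a.size) :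
    split m (node a b) = (node a (split (m - a.size - 1) b).1, (split (m - a.size - 1) b).2) := by
  simp [split, h]

lemma split_of_ge {m : ℕ} {z : PBT} (h : z.size ≤ m) : split m z = (z, leaf) := by
  induction z generalizing m with
  | leaf => rfl
  | node a b iha ihb =>
    simp only [size_node] at h
    rw [split_node_gt b (by omega), ihb (by omega)]

lemma split_zero (z : PBT) : split 0 z = (leaf, z) := by
  induction z with
  | leaf => rfl
  | node a b iha ihb => rw [split_node_le b (Nat.zero_le _), iha]

lemma split_over (u v : PBT) : split u.size (PBT.over u v) = (u, v) := by
  induction v with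
  | leaf => exact split_of_ge le_rfl
  | node v₁ v₂ ih₁ ih₂ =>
    rw [over_node, split_node_le v₂ (by rw [size_over]; omega), ih₁]

lemma split_under (u v : PBT) : split u.size (under u v) = (u, v) := by
  induction u with
  | leaf => exact split_zero v
  | node x₁ x₂ ih₁ ih₂ =>
    rw [under_node, split_node_gt (under x₂ v) (by simp)]
    have : x₁.size + x₂.size + 1 - x₁.size - 1 = x₂.size := by omega
    rw [size_node, this, ih₂]

lemma tle_node_under (x w b : PBT) : tle (node (under x w) b) (under x (node w b)) := by
  induction x with
  | leaf => exact tle_refl _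
  | node x₁ x₂ ih₁ ih₂ =>
    rw [under_node, under_node]
    exact tle_trans (rot_tle (Rot.rot x₁ (under x₂ w) b)) (tle_node_right x₁ ih₂)

lemma tle_over_node (a w v : PBT) : tle (PBT.over (node a w) v) (node a (PBT.over w v)) := by
  induction v with
  | leaf => exact tle_refl _
  | node v₁ v₂ ih₁ ih₂ =>
    rw [over_node, over_node]
    exact tle_trans (tle_node_left v₂ ih₁) (rot_tle (Rot.rot a (PBT.over w v₁) v₂))

lemma split_interval (m : ℕ) (z : PBT) :
    tle (PBT.over (split m z).1 (split m z).2) z ∧ tle z (under (split m z).1 (split m z).2) := by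
  induction z generalizing m with
  | leaf => exact ⟨tle_refl _, tle_refl _⟩
  | node a b iha ihb =>
    by_cases h : m ≤ a.size
    · rw [split_node_le b h]
      obtain ⟨h1, h2⟩ := iha m
      constructor
      · rw [over_node]
        exact tle_node_left b h1
      · exact tle_trans (tle_node_left b h2) (tle_node_under _ _ _)
    · rw [split_node_gt b h]
      obtain ⟨h1, h2⟩ := ihb (m - a.size - 1)
      constructor
      · exact tle_trans (tle_over_node a _ _) (tle_node_right a h1)
      · rw [under_node]
        exact tle_node_right a h2

lemma rot_split_tle {z z' : PBT} (h : Rot z z') (m : ℕ) :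
    tle (split m z).1 (split m z').1 ∧ tle (split m z).2 (split m z').2 := by
  induction h generalizing m with
  | rot a b c =>
    by_cases h1 : m ≤ a.size
    · rw [split_node_le c (by simp; omega), split_node_le b h1,
        split_node_le (node b c) h1]
      exact ⟨tle_refl _, rot_tle (Rot.rot _ b c)⟩
    · by_cases h2 : m ≤ a.size + b.size + 1
      · rw [split_node_le c (by simp; omega), split_node_gt b h1,
          split_node_gt (node b c) h1, split_node_le c (by simp; omega)]
        have e : m - a.size - 1 - b.size - 1 = m - (a.size + b.size + 1) - 1 := by omega
        exact ⟨tle_refl _, tle_refl _⟩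
      · rw [split_node_gt c (by simp; omega), split_node_gt (node b c) h1,
          split_node_gt c (by simp; omega)]
        simp only [size_node]
        have e : m - (a.size + b.size + 1) - 1 = m - a.size - 1 - b.size - 1 := by omega
        rw [e]
        exact ⟨rot_tle (Rot.rot a b _), tle_refl _⟩
  | @left a a' b h ih =>
    by_cases h1 : m ≤ a.size
    · rw [split_node_le b h1, split_node_le b (by rw [← h.size_eq]; exact h1)]
      obtain ⟨i1, i2⟩ := ih m
      exact ⟨i1, tle_node_left b i2⟩
    · rw [split_node_gt b h1, split_node_gt b (by rw [← h.size_eq]; exact h1),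
        ← h.size_eq]
      exact ⟨tle_node_left _ (rot_tle h), tle_refl _⟩
  | @right a b b' h ih =>
    by_cases h1 : m ≤ a.size
    · rw [split_node_le b h1, split_node_le b' h1]
      exact ⟨tle_refl _, tle_node_right _ (rot_tle h)⟩
    · rw [split_node_gt b h1, split_node_gt b' h1]
      obtain ⟨i1, i2⟩ := ih (m - a.size - 1)
      exact ⟨tle_node_right a i1, i2⟩

lemma tle_split {z z' : PBT} (h : tle z z') (m : ℕ) :
    tle (split m z).1 (split m z').1 ∧ tle (split m z).2 (split m z').2 := by
  induction h with
  | refl => exact ⟨tle_refl _, tle_refl _⟩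
  | tail h1 h2 ih =>
    obtain ⟨j1, j2⟩ := rot_split_tle h2 m
    exact ⟨tle_trans ih.1 j1, tle_trans ih.2 j2⟩

lemma split_eq_of_interval {m : ℕ} {u v z : PBT} (hu : u.size = m)
    (h1 : tle (PBT.over u v) z) (h2 : tle z (under u v)) : split m z = (u, v) := by
  subst hu
  have a1 := tle_split h1 u.size
  have a2 := tle_split h2 u.size
  rw [split_over] at a1
  rw [split_under] at a2
  rw [Prod.ext_iff]
  exact ⟨tle_antisymm a2.1 a1.1, tle_antisymm a2.2 a1.2⟩

/-- `bot m z` holds iff `z` is of the form `u / v` with `u.size = m`. -/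
def bot (m : ℕ) : PBT → Prop
  | leaf => m = 0
  | node a b => m = a.size + b.size + 1 ∨ (m ≤ a.size ∧ bot m a)

lemma bot_self (z : PBT) : bot z.size z := by
  cases z with
  | leaf => rfl
  | node a b => exact Or.inl rfl

lemma bot_over (u v : PBT) : bot u.size (PBT.over u v) := by
  induction v with
  | leaf => exact bot_self u
  | node v₁ v₂ ih₁ ih₂ =>
    rw [over_node]
    exact Or.inr ⟨by rw [size_over]; omega, ih₁⟩

lemma Rot.bot_of {z z' : PBT} (h : Rot z z') {m : ℕ} (hb : bot m z') : bot m z := by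
  induction h with
  | rot a b c =>
    rcases hb with h1 | ⟨h1, h2⟩
    · exact Or.inl (by simp at h1 ⊢; omega)
    · exact Or.inr ⟨by simp; omega, Or.inr ⟨h1, h2⟩⟩
  | @left a a' b h ih =>
    rcases hb with h1 | ⟨h1, h2⟩
    · exact Or.inl (by rw [h1, h.size_eq])
    · exact Or.inr ⟨by rw [h.size_eq]; exact h1, ih h2⟩
  | @right a b b' h ih =>
    rcases hb with h1 | ⟨h1, h2⟩
    · exact Or.inl (by rw [h1, h.size_eq])
    · exact Or.inr ⟨h1, h2⟩

lemma tle_bot {z z' : PBT} (h : tle z z') {m : ℕ} (hb : bot m z') : bot m z := by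
  induction h with
  | refl => exact hb
  | tail h1 h2 ih => exact ih (h2.bot_of hb)

lemma bot_eq_over {m : ℕ} {z : PBT} (hb : bot m z) :
    z = PBT.over (split m z).1 (split m z).2 := by
  induction z with
  | leaf => rfl
  | node a b iha ihb =>
    rcases hb with h1 | ⟨h1, h2⟩
    · rw [split_of_ge (by simp; omega), over_leaf]
    · rw [split_node_le b h1, over_node, ← iha h2]

end PBT
namespace PBT

lemma mem_tle_finset {z x : PBT} : z ∈ (finite_tle_right x).toFinset ↔ tle z x := by
  rw [Set.Finite.mem_toFinset, Set.mem_setOf_eq]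

lemma mem_interval_finset {z x y : PBT} :
    z ∈ (finite_interval x y).toFinset ↔ tle (PBT.over x y) z ∧ tle z (under x y) := by
  rw [Set.Finite.mem_toFinset, Set.mem_setOf_eq]

lemma bilin_S_S (f : PBT → PBT → ZY) (u v : PBT) : bilin f (S u) (S v) = f u v := by
  simp [bilin, S, Finsupp.sum_single_index]

lemma bilin_zero_left (f : PBT → PBT → ZY) (b : ZY) : bilin f 0 b = 0 := by
  simp [bilin]

lemma bilin_add_left (f : PBT → PBT → ZY) (a a' b : ZY) :
    bilin f (a + a') b = bilin f a b + bilin f a' b := by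
  unfold bilin
  apply Finsupp.sum_add_index'
  · intro x; simp
  · intro x c c'; simp [add_mul, add_smul, Finsupp.sum_add]

lemma bilin_zero_right (f : PBT → PBT → ZY) (a : ZY) : bilin f a 0 = 0 := by
  simp [bilin]

lemma bilin_add_right (f : PBT → PBT → ZY) (a b b' : ZY) :
    bilin f a (b + b') = bilin f a b + bilin f a b' := by
  unfold bilin
  rw [← Finsupp.sum_add]
  apply Finsupp.sum_congr
  intro x _
  apply Finsupp.sum_add_index'
  · intro y; simp
  · intro y c c'; simp [mul_add, add_smul]

lemma bilin_sum_left {ι : Type*} (f : PBT → PBT → ZY) (s : Finset ι) (g : ι → ZY) (b : ZY) :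
    bilin f (∑ i ∈ s, g i) b = ∑ i ∈ s, bilin f (g i) b := by
  classical
  induction s using Finset.cons_induction with
  | empty => simp [bilin_zero_left]
  | cons i s hi ih => rw [Finset.sum_cons, Finset.sum_cons, bilin_add_left, ih]

lemma bilin_sum_right {ι : Type*} (f : PBT → PBT → ZY) (a : ZY) (s : Finset ι) (g : ι → ZY) :
    bilin f a (∑ i ∈ s, g i) = ∑ i ∈ s, bilin f a (g i) := by
  classical
  induction s using Finset.cons_induction with
  | empty => simp [bilin_zero_right]
  | cons i s hi ih => rw [Finset.sum_cons, Finset.sum_cons, bilin_add_right, ih]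

lemma bilin_P_P (f : PBT → PBT → ZY) (x y : PBT) :
    bilin f (P x) (P y) =
      ∑ u ∈ (finite_tle_right x).toFinset, ∑ v ∈ (finite_tle_right y).toFinset, f u v := by
  rw [P, P, bilin_sum_left]
  refine Finset.sum_congr rfl fun u _ => ?_
  rw [bilin_sum_right]
  exact Finset.sum_congr rfl fun v _ => bilin_S_S f u v

end PBT

open PBT in
theorem P_basis_products_aux (x y : PBT) :
    P (x.under y) = starM (P x) (P y) ∧ P (x.over y) = overM (P x) (P y) := by
  classical
  constructor
  · -- under / star
    rw [starM, bilin_P_P, P]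
    rw [← Finset.sum_product']
    have hdisj : (↑((finite_tle_right x).toFinset ×ˢ (finite_tle_right y).toFinset) :
        Set (PBT × PBT)).PairwiseDisjoint fun p => (finite_interval p.1 p.2).toFinset := by
      intro p hp q hq hpq
      simp only [Finset.coe_product, Set.mem_prod, Finset.mem_coe, mem_tle_finset] at hp hq
      refine Finset.disjoint_left.mpr fun z hzp hzq => hpq ?_
      rw [mem_interval_finset] at hzp hzq
      have e1 : split x.size z = (p.1, p.2) :=
        split_eq_of_interval (hp.1.size_eq) hzp.1 hzp.2
      have e2 : split x.size z = (q.1, q.2) :=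
        split_eq_of_interval (hq.1.size_eq) hzq.1 hzq.2
      rw [e1] at e2
      exact Prod.ext_iff.mpr ⟨congrArg Prod.fst e2, congrArg Prod.snd e2⟩
    have hset : (finite_tle_right (x.under y)).toFinset =
        ((finite_tle_right x).toFinset ×ˢ (finite_tle_right y).toFinset).biUnion
          fun p => (finite_interval p.1 p.2).toFinset := by
      ext z
      rw [mem_tle_finset, Finset.mem_biUnion]
      constructor
      · intro hz
        refine ⟨split x.size z, ?_, ?_⟩
        · rw [Finset.mem_product, mem_tle_finset, mem_tle_finset]
          have := tle_split hz x.size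
          rw [split_under] at this
          exact this
        · rw [mem_interval_finset]
          exact split_interval x.size z
      · rintro ⟨p, hp, hzp⟩
        rw [Finset.mem_product, mem_tle_finset, mem_tle_finset] at hp
        rw [mem_interval_finset] at hzp
        exact tle_trans hzp.2 (tle_under hp.1 hp.2)
    rw [hset, Finset.sum_biUnion hdisj]
    refine Finset.sum_congr rfl fun p _ => ?_
    rfl
  · -- over
    rw [overM, bilin_P_P, P]
    rw [← Finset.sum_product']
    refine Finset.sum_nbij' (fun z => split x.size z) (fun p => PBT.over p.1 p.2)
      ?_ ?_ ?_ ?_ ?_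
    · intro z hz
      rw [mem_tle_finset] at hz
      have := tle_split hz x.size
      rw [split_over] at this
      simp only [Finset.mem_product, mem_tle_finset]
      exact this
    · intro p hp
      simp only [Finset.mem_product, mem_tle_finset] at hp
      rw [mem_tle_finset]
      exact tle_over hp.1 hp.2
    · intro z hz
      rw [mem_tle_finset] at hz
      have hb : bot x.size z := tle_bot hz (bot_over x y)
      exact (bot_eq_over hb).symm
    · intro p hp
      simp only [Finset.mem_product, mem_tle_finset] at hp
      have hsz : p.1.size = x.size := hp.1.size_eq
      rw [← hsz]
      exact split_over p.1 p.2
    · intro z hz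
      rw [mem_tle_finset] at hz
      have hb : bot x.size z := tle_bot hz (bot_over x y)
      exact congrArg S (bot_eq_over hb)
open PBT in
/-- For all planar binary trees `x, y` : `P_{x∖y} = P_x * P_y` and
`P_{x/y} = P_x / P_y` in `ℤY`. -/
theorem P_basis_products (x y : PBT) :
    P (x.under y) = starM (P x) (P y) ∧ P (x.over y) = overM (P x) (P y) :=
  P_basis_products_aux x y
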